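/- Let n ≥ 1 and let m > n be integers, and let k_0, k_1, …, k_{n−1} ∈ ℤ with at least one k_j ≠ 0. Then the integral over the n-dimensional torus 𝕋ⁿ (with 𝕋 = {z ∈ ℂ : |z| = 1} and normalized arclength measure dz_j = dθ_j/2π on each factor) of z_0^{k_0 m} z_1^{k_1 m} ⋯ z_{n−1}^{k_{n−1} m} · ∏_{i<j} |z_i − z_j|² equals 0. (Negative powers z^{k} for k < 0 are interpreted as conj(z)^{−k} on 𝕋.) -/

import Mathlib

open MeasureTheory Finset

/-- The normalized uniform (arclength) probability measure on the unit circle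
`𝕋 = {z ∈ ℂ : |z| = 1}`, as a measure on `ℂ`: the pushforward of normalized Lebesgue
measure on `[0, 2π)` under `θ ↦ e^{iθ}`. -/
noncomputable def circleUniform : Measure ℂ :=
  Measure.map (fun θ : ℝ => Complex.exp (θ * Complex.I))
    ((ENNReal.ofReal (2 * Real.pi))⁻¹ • volume.restrict (Set.Ioc 0 (2 * Real.pi)))

open Complex

noncomputable def mu0 : Measure ℝ :=
  (ENNReal.ofReal (2 * Real.pi))⁻¹ • volume.restrict (Set.Ioc 0 (2 * Real.pi))

instance : IsProbabilityMeasure mu0 := by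
  constructor
  rw [mu0, Measure.smul_apply, Measure.restrict_apply MeasurableSet.univ, Set.univ_inter,
    Real.volume_Ioc]
  simp only [smul_eq_mul, sub_zero]
  rw [ENNReal.inv_mul_cancel]
  · simp [Real.pi_pos]
  · exact ENNReal.ofReal_ne_top

lemma integral_mu0_exp {p : ℤ} (hp : p ≠ 0) :
    ∫ θ : ℝ, Complex.exp ((p : ℂ) * θ * Complex.I) ∂mu0 = 0 := by
  have hc : (p : ℂ) * Complex.I ≠ 0 := by
    simp [Complex.I_ne_zero, hp]
  rw [mu0, integral_smul_measure]
  have h1 : ∀ θ : ℝ, Complex.exp ((p : ℂ) * θ * Complex.I)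
      = Complex.exp (((p : ℂ) * Complex.I) * θ) := by intro θ; ring_nf
  simp_rw [h1]
  rw [← intervalIntegral.integral_of_le (by positivity : (0:ℝ) ≤ 2 * Real.pi)]
  rw [integral_exp_mul_complex hc]
  have h2 : Complex.exp ((p : ℂ) * Complex.I * ((2 * Real.pi : ℝ) : ℂ)) = 1 := by
    rw [show ((p : ℂ) * Complex.I * ((2 * Real.pi : ℝ) : ℂ)) = (p : ℤ) * (2 * Real.pi * Complex.I)
      by push_cast; ring]
    exact Complex.exp_int_mul_two_pi_mul_I p
  rw [h2]
  simp

lemma integral_pi_prod {n : ℕ} (μ : Measure ℝ) [SigmaFinite μ] (f : Fin n → ℝ → ℂ) :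
    ∫ x : Fin n → ℝ, ∏ i, f i (x i) ∂(Measure.pi fun _ => μ) = ∏ i, ∫ x, f i x ∂μ := by
  letI : MeasureSpace ℝ := ⟨μ⟩
  exact MeasureTheory.integral_fintype_prod_eq_prod f

lemma measurable_zpowC (p : ℤ) : Measurable fun z : ℂ => z ^ p := by
  rcases p with q | q
  · simpa using (measurable_id (α := ℂ)).pow_const q
  · simp only [zpow_negSucc]
    exact ((measurable_id (α := ℂ)).pow_const (q + 1)).inv
lemma key_expand (n m : ℕ) (k : Fin n → ℤ) (θ : Fin n → ℝ) :
    (∏ i : Fin n, Complex.exp (θ i * Complex.I) ^ (k i * (m : ℤ))) *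
      (∏ i : Fin n, ∏ j ∈ Ioi i,
        ((‖Complex.exp (θ i * Complex.I) - Complex.exp (θ j * Complex.I)‖ : ℂ)) ^ 2) =
    ∑ σ : Equiv.Perm (Fin n), ∑ τ : Equiv.Perm (Fin n),
      (((Equiv.Perm.sign σ : ℤ) : ℂ) * ((Equiv.Perm.sign τ : ℤ) : ℂ)) *
        ∏ i, Complex.exp
          (((k i * (m : ℤ) + ((σ⁻¹ i : Fin n) : ℕ) - ((τ⁻¹ i : Fin n) : ℕ) : ℤ) : ℂ)
            * θ i * Complex.I) := by
  set w : Fin n → ℂ := fun i => Complex.exp (θ i * Complex.I) with hw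
  set N : ℕ := ∑ i : Fin n, (Ioi i).card with hN
  -- conjugate of w
  have hu : ∀ x : ℝ, (starRingEnd ℂ) (Complex.exp (x * Complex.I))
      = Complex.exp (-((x : ℂ) * Complex.I)) := by
    intro x
    rw [← Complex.exp_conj, map_mul, Complex.conj_ofReal, Complex.conj_I, mul_neg]
  -- step A : each |·|² factor
  have hA : ∀ z z' : ℂ, ((‖z - z'‖ : ℝ) : ℂ) ^ 2
      = (z - z') * ((starRingEnd ℂ) z - (starRingEnd ℂ) z') := by
    intro z z'
    rw [← map_sub, Complex.mul_conj, Complex.normSq_eq_norm_sq]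
    push_cast; ring
  -- sign lemma
  have hsign : ∀ v : Fin n → ℂ, (∏ i, ∏ j ∈ Ioi i, (v i - v j))
      = (-1 : ℂ) ^ N * Matrix.det (Matrix.vandermonde v) := by
    intro v
    rw [Matrix.det_vandermonde, hN, ← Finset.prod_pow_eq_pow_sum, ← Finset.prod_mul_distrib]
    refine Finset.prod_congr rfl fun i _ => ?_
    rw [← Finset.prod_const, ← Finset.prod_mul_distrib]
    exact Finset.prod_congr rfl fun j _ => by ring
  -- det expansion
  have hdet : ∀ v : Fin n → ℂ, Matrix.det (Matrix.vandermonde v)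
      = ∑ σ : Equiv.Perm (Fin n), ((Equiv.Perm.sign σ : ℤ) : ℂ)
          * ∏ i, v i ^ (((σ⁻¹ i : Fin n) : ℕ)) := by
    intro v
    rw [Matrix.det_apply']
    refine Finset.sum_congr rfl fun σ _ => ?_
    congr 1
    simp only [Matrix.vandermonde_apply]
    rw [← Equiv.prod_comp (σ⁻¹ : Equiv.Perm (Fin n)) (fun j => v (σ j) ^ ((j : Fin n) : ℕ))]
    exact Finset.prod_congr rfl fun i _ => by simp
  -- per-coordinate merging
  have hterm : ∀ (x : ℝ) (K : ℤ) (a b : ℕ),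
      Complex.exp (x * Complex.I) ^ K *
        (Complex.exp (x * Complex.I) ^ a *
          ((starRingEnd ℂ) (Complex.exp (x * Complex.I))) ^ b)
      = Complex.exp (((K + a - b : ℤ) : ℂ) * x * Complex.I) := by
    intro x K a b
    rw [hu, ← Complex.exp_nat_mul, ← Complex.exp_nat_mul, ← Complex.exp_int_mul,
      ← Complex.exp_add, ← Complex.exp_add]
    congr 1; push_cast; ring
  -- rewrite the pair product
  have hpairs : (∏ i : Fin n, ∏ j ∈ Ioi i, ((‖w i - w j‖ : ℝ) : ℂ) ^ 2)
      = Matrix.det (Matrix.vandermonde w)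
        * Matrix.det (Matrix.vandermonde fun i => (starRingEnd ℂ) (w i)) := by
    simp only [hA, Finset.prod_mul_distrib]
    rw [hsign w, hsign fun i => (starRingEnd ℂ) (w i)]
    have h1 : ((-1 : ℂ) ^ N) * ((-1 : ℂ) ^ N) = 1 := by
      rw [← mul_pow]; norm_num
    calc ((-1:ℂ)^N * Matrix.det (Matrix.vandermonde w)) *
          ((-1:ℂ)^N * Matrix.det (Matrix.vandermonde fun i => (starRingEnd ℂ) (w i)))
        = (((-1:ℂ)^N) * ((-1:ℂ)^N)) * (Matrix.det (Matrix.vandermonde w)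
            * Matrix.det (Matrix.vandermonde fun i => (starRingEnd ℂ) (w i))) := by ring
      _ = _ := by rw [h1, one_mul]
  rw [hpairs, hdet, hdet, Finset.sum_mul_sum, Finset.mul_sum]
  refine Finset.sum_congr rfl fun σ _ => ?_
  rw [Finset.mul_sum]
  refine Finset.sum_congr rfl fun τ _ => ?_
  have hsplit : (∏ i, Complex.exp
      (((k i * (m : ℤ) + ((σ⁻¹ i : Fin n) : ℕ) - ((τ⁻¹ i : Fin n) : ℕ) : ℤ) : ℂ)
        * θ i * Complex.I))
      = ∏ i, (w i ^ (k i * (m : ℤ)) *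
          (w i ^ (((σ⁻¹ i : Fin n) : ℕ)) * ((starRingEnd ℂ) (w i)) ^ (((τ⁻¹ i : Fin n) : ℕ)))) :=
    Finset.prod_congr rfl fun i _ => (hterm (θ i) (k i * m) _ _).symm
  rw [hsplit]
  simp only [Finset.prod_mul_distrib]
  ring

lemma circleUniform_eq : circleUniform
    = Measure.map (fun θ : ℝ => Complex.exp (θ * Complex.I)) mu0 := rfl

lemma measurable_e : Measurable fun θ : ℝ => Complex.exp (θ * Complex.I) :=
  (Complex.continuous_ofReal.mul continuous_const).cexp.measurable

instance : IsProbabilityMeasure circleUniform := by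
  rw [circleUniform_eq]
  exact Measure.isProbabilityMeasure_map measurable_e.aemeasurable

lemma integrable_exp_prod {n : ℕ} (p : Fin n → ℤ) :
    Integrable (fun θ : Fin n → ℝ => ∏ i, Complex.exp ((p i : ℂ) * θ i * Complex.I))
      (Measure.pi fun _ : Fin n => mu0) := by
  have hc : Continuous fun θ : Fin n → ℝ => ∏ i, Complex.exp ((p i : ℂ) * θ i * Complex.I) := by
    apply continuous_finset_prod
    intro i _
    exact ((continuous_const.mul
      (Complex.continuous_ofReal.comp (continuous_apply i))).mul continuous_const).cexp
  refine ⟨hc.aestronglyMeasurable, HasFiniteIntegral.of_bounded (C := 1) ?_⟩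
  filter_upwards with θ
  rw [norm_prod]
  apply le_of_eq
  rw [← Finset.prod_const_one (s := (univ : Finset (Fin n)))]
  refine Finset.prod_congr rfl fun i _ => ?_
  simp [Complex.norm_exp]

/-- For `m > n ≥ 1` and integers `k₀,…,k_{n-1}` not all zero, the integral over `𝕋ⁿ`
(with the normalized uniform measure on each factor) of
`z₀^{k₀ m} ⋯ z_{n-1}^{k_{n-1} m} · ∏_{i<j} |z_i - z_j|²` is `0`.
(Negative powers are `zpow`, i.e. `conj` powers on the circle.) -/
theorem stmt7 (n m : ℕ) (hn : 1 ≤ n) (hm : n < m) (k : Fin n → ℤ)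
    (hk : ∃ j, k j ≠ 0) :
    ∫ z : Fin n → ℂ,
      (∏ i : Fin n, z i ^ (k i * (m : ℤ))) *
        (∏ i : Fin n, ∏ j ∈ Ioi i, ((‖z i - z j‖ : ℂ)) ^ 2)
      ∂(Measure.pi fun _ : Fin n => circleUniform) = 0 := by
  obtain ⟨j, hj⟩ := hk
  have hmp : MeasurePreserving (fun θ : Fin n → ℝ => fun i => Complex.exp (θ i * Complex.I))
      (Measure.pi fun _ => mu0) (Measure.pi fun _ => circleUniform) :=
    measurePreserving_pi _ _ (fun _ => ⟨measurable_e, circleUniform_eq.symm⟩)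
  have hFm : Measurable fun z : Fin n → ℂ =>
      (∏ i : Fin n, z i ^ (k i * (m : ℤ))) *
        (∏ i : Fin n, ∏ j ∈ Ioi i, ((‖z i - z j‖ : ℂ)) ^ 2) := by
    apply Measurable.mul
    · exact Finset.measurable_prod _ fun i _ =>
        (measurable_zpowC _).comp (measurable_pi_apply i)
    · refine Finset.measurable_prod _ fun i _ => Finset.measurable_prod _ fun l _ => ?_
      exact ((Complex.measurable_ofReal.comp
        ((measurable_pi_apply i).sub (measurable_pi_apply l)).norm).pow_const 2)
  rw [← hmp.map_eq, integral_map hmp.measurable.aemeasurable hFm.aestronglyMeasurable]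
  simp only []
  simp only [key_expand n m k]
  have hint : ∀ σ τ : Equiv.Perm (Fin n), Integrable (fun θ : Fin n → ℝ =>
      (((Equiv.Perm.sign σ : ℤ) : ℂ) * ((Equiv.Perm.sign τ : ℤ) : ℂ)) *
        ∏ i, Complex.exp
          (((k i * (m : ℤ) + ((σ⁻¹ i : Fin n) : ℕ) - ((τ⁻¹ i : Fin n) : ℕ) : ℤ) : ℂ)
            * θ i * Complex.I)) (Measure.pi fun _ : Fin n => mu0) :=
    fun σ τ => (integrable_exp_prod
      (fun i => k i * (m : ℤ) + ((σ⁻¹ i : Fin n) : ℕ) - ((τ⁻¹ i : Fin n) : ℕ))).const_mul _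
  rw [integral_finset_sum _ (fun σ _ => integrable_finset_sum _ (fun τ _ => hint σ τ))]
  refine Finset.sum_eq_zero fun σ _ => ?_
  rw [integral_finset_sum _ (fun τ _ => hint σ τ)]
  refine Finset.sum_eq_zero fun τ _ => ?_
  rw [integral_const_mul]
  have hfac := integral_pi_prod (n := n) mu0 (fun i x => Complex.exp
    (((k i * (m : ℤ) + ((σ⁻¹ i : Fin n) : ℕ) - ((τ⁻¹ i : Fin n) : ℕ) : ℤ) : ℂ)
      * x * Complex.I))
  rw [hfac]
  have hpj : (k j * (m : ℤ) + ((σ⁻¹ j : Fin n) : ℕ) - ((τ⁻¹ j : Fin n) : ℕ) : ℤ) ≠ 0 := by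
    have ha : ((σ⁻¹ j : Fin n) : ℕ) < n := (σ⁻¹ j).is_lt
    have hb : ((τ⁻¹ j : Fin n) : ℕ) < n := (τ⁻¹ j).is_lt
    have hm0 : (0 : ℤ) ≤ (m : ℤ) := Int.natCast_nonneg m
    have hmn : (n : ℤ) < (m : ℤ) := by exact_mod_cast hm
    have hK : ((m : ℤ) ≤ k j * (m : ℤ) ∨ k j * (m : ℤ) ≤ -(m : ℤ)) := by
      rcases hj.lt_or_gt with h | h
      · right; nlinarith
      · left; nlinarith
    generalize k j * (m : ℤ) = K at hK ⊢
    omega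
  rw [Finset.prod_eq_zero (Finset.mem_univ j) (integral_mu0_exp hpj), mul_zero]
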